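/- Fix 0 < c < 1. Let G be a connected graph with minimum degree δ = cn, adjacency eigenvalues λ₁ ≥ ⋯ ≥ λₙ, λ = max{|λ₂|,|λₙ|}, and normalized Perron eigenvector ν with minimum entry ν_min, satisfying 2λ₁ν_min²cn > λ. Then for any two vertices v, v′ (whose neighborhoods are G(v), G(v′)), the number of edges between their neighborhoods satisfies e(G(v), G(v′)) ≥ cn(λ₁cnν_min² − λ). -/

import Mathlib

open Matrix Finset
open scoped RealInnerProductSpace

noncomputable def toE {n : ℕ} (v : Fin n → ℝ) : EuclideanSpace ℝ (Fin n) :=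
  (WithLp.equiv 2 (Fin n → ℝ)).symm v

private lemma symm_inner {n : ℕ} {A : Matrix (Fin n) (Fin n) ℝ} (hAH : A.IsHermitian)
    (a b : EuclideanSpace ℝ (Fin n)) :
    ⟪a, toE (A *ᵥ b)⟫ = ⟪toE (A *ᵥ a), b⟫ := by
  have hT : Aᵀ = A := by
    have := hAH.eq
    simpa [Matrix.conjTranspose, Matrix.map, Matrix.transpose] using this
  simp only [PiLp.inner_apply, RCLike.inner_apply, conj_trivial]
  have h1 : (a : Fin n → ℝ) ⬝ᵥ (A *ᵥ (b : Fin n → ℝ)) = (A *ᵥ (a : Fin n → ℝ)) ⬝ᵥ b := by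
    rw [Matrix.dotProduct_mulVec, ← Matrix.mulVec_transpose, hT]
  simpa [dotProduct, toE, mul_comm] using h1

private lemma inner_basis_mulVec {n : ℕ} {A : Matrix (Fin n) (Fin n) ℝ} (hAH : A.IsHermitian)
    (w : EuclideanSpace ℝ (Fin n)) (i : Fin n) :
    ⟪hAH.eigenvectorBasis i, toE (A *ᵥ w)⟫
      = hAH.eigenvalues i * ⟪hAH.eigenvectorBasis i, w⟫ := by
  rw [symm_inner hAH]
  have h := hAH.mulVec_eigenvectorBasis i
  have : toE (A *ᵥ (hAH.eigenvectorBasis i : Fin n → ℝ))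
      = hAH.eigenvalues i • hAH.eigenvectorBasis i := by
    apply PiLp.ext; intro j
    simpa [toE] using congrFun h j
  rw [this, real_inner_smul_left]

private lemma spectral_expand {n : ℕ} {A : Matrix (Fin n) (Fin n) ℝ} (hAH : A.IsHermitian)
    (u w : EuclideanSpace ℝ (Fin n)) :
    ⟪u, toE (A *ᵥ w)⟫
      = ∑ i, hAH.eigenvalues i *
          (⟪hAH.eigenvectorBasis i, u⟫ * ⟪hAH.eigenvectorBasis i, w⟫) := by
  have h := (hAH.eigenvectorBasis).sum_inner_mul_inner u (toE (A *ᵥ w))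
  rw [← h]
  congr 1
  ext i
  rw [inner_basis_mulVec hAH w i, real_inner_comm u]
  ring

private lemma perp_bound {n : ℕ} (hn : 1 < n) {A : Matrix (Fin n) (Fin n) ℝ}
    (hAH : A.IsHermitian)
    (lam : Fin n → ℝ) (hmono : Antitone lam)
    (heig : ∃ e : Fin n ≃ Fin n, ∀ i, lam i = hAH.eigenvalues (e i))
    (ν : EuclideanSpace ℝ (Fin n)) (hν0 : ν ≠ 0)
    (hνeig : A *ᵥ (ν : Fin n → ℝ) = lam ⟨0, by omega⟩ • (ν : Fin n → ℝ))
    (lamAbs : ℝ) (hlamAbs : lamAbs = max |lam ⟨1, by omega⟩| |lam ⟨n - 1, by omega⟩|)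
    (x y : EuclideanSpace ℝ (Fin n)) (hx : ⟪x, ν⟫ = 0) (hy : ⟪y, ν⟫ = 0) :
    |⟪x, toE (A *ᵥ (y : Fin n → ℝ))⟫| ≤ lamAbs * (‖x‖ * ‖y‖) := by
  obtain ⟨e, he⟩ := heig
  have hlam0nn : 0 ≤ lamAbs := by
    rw [hlamAbs]; exact le_max_of_le_left (abs_nonneg _)
  let B : OrthonormalBasis (Fin n) ℝ (EuclideanSpace ℝ (Fin n)) := hAH.eigenvectorBasis
  let μ : Fin n → ℝ := hAH.eigenvalues
  -- eigen-relation for the coefficients of ν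
  have hCrel : ∀ i, (μ i - lam ⟨0, by omega⟩) * ⟪B i, ν⟫ = 0 := by
    intro i
    have h1 : ⟪B i, toE (A *ᵥ (ν : Fin n → ℝ))⟫ = μ i * ⟪B i, ν⟫ := inner_basis_mulVec hAH ν i
    have h2 : ⟪B i, toE (A *ᵥ (ν : Fin n → ℝ))⟫ = lam ⟨0, by omega⟩ * ⟪B i, ν⟫ := by
      rw [hνeig]
      have h3 : toE (lam ⟨0, by omega⟩ • (ν : Fin n → ℝ)) = lam ⟨0, by omega⟩ • ν := rfl
      rw [h3, real_inner_smul_right]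
    rw [h1] at h2
    linarith [h2]
  -- bound on |lam j| for j ≠ 0
  have hbnd : ∀ j : Fin n, j ≠ (⟨0, by omega⟩ : Fin n) → |lam j| ≤ lamAbs := by
    intro j hj
    have h1j : (⟨1, by omega⟩ : Fin n) ≤ j := by
      show (1 : ℕ) ≤ (j : ℕ)
      rcases Nat.eq_zero_or_pos (j : ℕ) with h | h
      · exact absurd (Fin.ext h) hj
      · exact h
    have hjn : j ≤ (⟨n - 1, by omega⟩ : Fin n) := by
      show (j : ℕ) ≤ n - 1
      omega
    have hu : lam j ≤ lam ⟨1, by omega⟩ := hmono h1j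
    have hl : lam ⟨n - 1, by omega⟩ ≤ lam j := hmono hjn
    rw [hlamAbs, abs_le]
    constructor
    · have h2 := neg_abs_le (lam ⟨n - 1, by omega⟩)
      have h3 := le_max_right |lam ⟨1, by omega⟩| |lam ⟨n - 1, by omega⟩|
      linarith
    · exact le_trans hu (le_trans (le_abs_self _) (le_max_left _ _))
  -- termwise bound
  have hterm : ∀ i, |μ i * (⟪B i, x⟫ * ⟪B i, y⟫)|
      ≤ lamAbs * (|⟪B i, x⟫| * |⟪B i, y⟫|) := by
    have hle : lam ⟨1, by omega⟩ ≤ lam ⟨0, by omega⟩ := by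
      apply hmono
      show (0 : ℕ) ≤ 1
      omega
    have hei : ∀ i, μ i = lam (e.symm i) := by
      intro i; rw [he (e.symm i), Equiv.apply_symm_apply]
    rcases eq_or_lt_of_le hle with hcase | hcase
    · intro i
      have hbi : |μ i| ≤ lamAbs := by
        rcases eq_or_ne (e.symm i) (⟨0, by omega⟩ : Fin n) with h0 | h0
        · rw [hei i, h0, ← hcase, hlamAbs]
          exact le_max_left _ _
        · rw [hei i]; exact hbnd _ h0
      rw [abs_mul, abs_mul]
      exact mul_le_mul_of_nonneg_right hbi (by positivity)
    · set i0 := e ⟨0, by omega⟩ with hi0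
      have hμne : ∀ i, i ≠ i0 → μ i ≠ lam ⟨0, by omega⟩ := by
        intro i hi
        have h0 : e.symm i ≠ (⟨0, by omega⟩ : Fin n) := by
          intro hcon
          exact hi (by rw [hi0, ← hcon, Equiv.apply_symm_apply])
        rw [hei i]
        have hle2 : lam (e.symm i) ≤ lam ⟨1, by omega⟩ := by
          apply hmono
          show (1 : ℕ) ≤ ((e.symm i) : ℕ)
          rcases Nat.eq_zero_or_pos ((e.symm i) : ℕ) with h | h
          · exact absurd (Fin.ext h) h0
          · exact h
        intro hcon
        rw [hcon] at hle2
        linarith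
      have hCzero : ∀ i, i ≠ i0 → ⟪B i, ν⟫ = 0 := by
        intro i hi
        rcases mul_eq_zero.1 (hCrel i) with h | h
        · exact absurd (by linarith [h] : μ i = lam ⟨0, by omega⟩) (hμne i hi)
        · exact h
      have hCi0 : ⟪B i0, ν⟫ ≠ 0 := by
        intro hcon
        apply hν0
        rw [← B.sum_repr' ν]
        apply Finset.sum_eq_zero
        intro i _
        rcases eq_or_ne i i0 with h | h
        · rw [h, hcon, zero_smul]
        · rw [hCzero i h, zero_smul]
      have hX0 : ⟪B i0, x⟫ = 0 := by
        have hsum : ∑ i, ⟪x, B i⟫ * ⟪B i, ν⟫ = 0 := by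
          rw [B.sum_inner_mul_inner x ν, hx]
        have hone : ∑ i, ⟪x, B i⟫ * ⟪B i, ν⟫ = ⟪x, B i0⟫ * ⟪B i0, ν⟫ := by
          apply Finset.sum_eq_single
          · intro i _ hi; rw [hCzero i hi, mul_zero]
          · intro h; exact absurd (Finset.mem_univ i0) h
        rw [hone] at hsum
        rw [real_inner_comm]
        exact (mul_eq_zero.1 hsum).resolve_right hCi0
      have hY0 : ⟪B i0, y⟫ = 0 := by
        have hsum : ∑ i, ⟪y, B i⟫ * ⟪B i, ν⟫ = 0 := by
          rw [B.sum_inner_mul_inner y ν, hy]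
        have hone : ∑ i, ⟪y, B i⟫ * ⟪B i, ν⟫ = ⟪y, B i0⟫ * ⟪B i0, ν⟫ := by
          apply Finset.sum_eq_single
          · intro i _ hi; rw [hCzero i hi, mul_zero]
          · intro h; exact absurd (Finset.mem_univ i0) h
        rw [hone] at hsum
        rw [real_inner_comm]
        exact (mul_eq_zero.1 hsum).resolve_right hCi0
      intro i
      rcases eq_or_ne i i0 with h | h
      · rw [h, hX0, zero_mul, mul_zero, abs_zero]
        positivity
      · have h0 : e.symm i ≠ (⟨0, by omega⟩ : Fin n) := by
          intro hcon
          exact h (by rw [hi0, ← hcon, Equiv.apply_symm_apply])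
        have hbi : |μ i| ≤ lamAbs := by rw [hei i]; exact hbnd _ h0
        rw [abs_mul, abs_mul]
        exact mul_le_mul_of_nonneg_right hbi (by positivity)
  -- assemble
  rw [spectral_expand hAH x y]
  have hxn : ∑ i, |⟪B i, x⟫| ^ 2 = ‖x‖ ^ 2 := by
    have h := B.sum_inner_mul_inner x x
    rw [real_inner_self_eq_norm_sq] at h
    rw [← h]
    apply Finset.sum_congr rfl
    intro i _
    rw [sq_abs, real_inner_comm (B i) x]
    ring
  have hyn : ∑ i, |⟪B i, y⟫| ^ 2 = ‖y‖ ^ 2 := by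
    have h := B.sum_inner_mul_inner y y
    rw [real_inner_self_eq_norm_sq] at h
    rw [← h]
    apply Finset.sum_congr rfl
    intro i _
    rw [sq_abs, real_inner_comm (B i) y]
    ring
  calc |∑ i, μ i * (⟪B i, x⟫ * ⟪B i, y⟫)|
      ≤ ∑ i, |μ i * (⟪B i, x⟫ * ⟪B i, y⟫)| := Finset.abs_sum_le_sum_abs _ _
    _ ≤ ∑ i, lamAbs * (|⟪B i, x⟫| * |⟪B i, y⟫|) := Finset.sum_le_sum (fun i _ => hterm i)
    _ = lamAbs * ∑ i, |⟪B i, x⟫| * |⟪B i, y⟫| := by rw [Finset.mul_sum]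
    _ ≤ lamAbs * (‖x‖ * ‖y‖) := by
        apply mul_le_mul_of_nonneg_left _ hlam0nn
        have hcs := Finset.sum_mul_sq_le_sq_mul_sq Finset.univ
          (fun i => |⟪B i, x⟫|) (fun i => |⟪B i, y⟫|)
        rw [hxn, hyn] at hcs
        have h1 : (0:ℝ) ≤ ∑ i, |⟪B i, x⟫| * |⟪B i, y⟫| :=
          Finset.sum_nonneg fun i _ => mul_nonneg (abs_nonneg _) (abs_nonneg _)
        nlinarith [norm_nonneg x, norm_nonneg y, mul_nonneg (norm_nonneg x) (norm_nonneg y)]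


private lemma final_arith (cn s t P lamAbs mu nm q a b : ℝ)
    (hcn : 0 < cn) (hs : cn ≤ s) (ht : cn ≤ t)
    (hPsq : P ^ 2 = s * t) (hPnn : 0 ≤ P)
    (ha : nm * s ≤ a) (hb : nm * t ≤ b)
    (hgap : lamAbs < 2 * mu * nm ^ 2 * cn)
    (hlamAbs : 0 ≤ lamAbs) (hmu : 0 < mu) (hnm : 0 < nm)
    (hq : -(lamAbs * P) ≤ q) :
    cn * (mu * cn * nm ^ 2 - lamAbs) ≤ q + mu * (a * b) := by
  have hspos : 0 < s := lt_of_lt_of_le hcn hs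
  have htpos : 0 < t := lt_of_lt_of_le hcn ht
  have hPge : cn ≤ P := by nlinarith
  have hab : nm ^ 2 * (s * t) ≤ a * b := by
    have h1 : (0:ℝ) ≤ nm * t := by positivity
    have h2 : (0:ℝ) ≤ a := le_trans (by positivity) ha
    calc nm ^ 2 * (s * t) = (nm * s) * (nm * t) := by ring
      _ ≤ a * b := mul_le_mul ha hb h1 h2
  have hkey : cn * (mu * cn * nm ^ 2 - lamAbs) ≤ mu * (nm ^ 2 * P ^ 2) - lamAbs * P := by
    nlinarith [mul_nonneg (sub_nonneg.2 hPge) (sub_nonneg.2 hgap.le),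
      mul_nonneg (mul_nonneg hmu.le (sq_nonneg nm)) (sq_nonneg (P - cn))]
  rw [hPsq] at hkey
  nlinarith

theorem edges_between_neighborhoods {n : ℕ} (hn : 2 ≤ n)
    (G : SimpleGraph (Fin n)) [DecidableRel G.Adj] (hG : G.Connected)
    (c : ℝ) (hc0 : 0 < c) (hc1 : c < 1)
    (hδ : (G.minDegree : ℝ) = c * n)
    (A : Matrix (Fin n) (Fin n) ℝ) (hA : A = G.adjMatrix ℝ)
    (hAH : A.IsHermitian)
    (lam : Fin n → ℝ) (hmono : Antitone lam)
    (heig : ∃ e : Fin n ≃ Fin n, ∀ i, lam i = hAH.eigenvalues (e i))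
    (ν : Fin n → ℝ) (hνpos : ∀ i, 0 < ν i) (hνnorm : ∑ i, ν i ^ 2 = 1)
    (hνeig : A *ᵥ ν = lam ⟨0, by omega⟩ • ν)
    (lamAbs : ℝ)
    (hlamAbs : lamAbs = max |lam ⟨1, by omega⟩| |lam ⟨n - 1, by omega⟩|)
    (νmin : ℝ) (hνmin : IsLeast (Set.range ν) νmin)
    (hgap : 2 * lam ⟨0, by omega⟩ * νmin ^ 2 * c * n > lamAbs)
    (v v' : Fin n) :
    (∑ u ∈ G.neighborFinset v, ∑ w ∈ G.neighborFinset v', A u w)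
      ≥ c * n * (lam ⟨0, by omega⟩ * c * n * νmin ^ 2 - lamAbs) := by
  classical
  set μ0 : ℝ := lam ⟨0, by omega⟩ with hμ0
  set S := G.neighborFinset v with hS
  set T := G.neighborFinset v' with hT
  set s : ℝ := (S.card : ℝ) with hs
  set t : ℝ := (T.card : ℝ) with ht
  -- basic positivity facts
  have hνminpos : 0 < νmin := by
    obtain ⟨i, hi⟩ := hνmin.1
    rw [← hi]; exact hνpos i
  have hνminle : ∀ i, νmin ≤ ν i := fun i => hνmin.2 ⟨i, rfl⟩
  have hlamAbsnn : 0 ≤ lamAbs := by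
    rw [hlamAbs]; exact le_max_of_le_left (abs_nonneg _)
  have hnpos : (0:ℝ) < n := by positivity
  have hcn : 0 < c * n := by positivity
  have hμ0pos : 0 < μ0 := by
    have hq : 0 < νmin ^ 2 * (c * n) := by positivity
    nlinarith [hq]
  -- degree bounds
  have hdeg : ∀ u : Fin n, c * n ≤ ((G.neighborFinset u).card : ℝ) := by
    intro u
    rw [SimpleGraph.card_neighborFinset_eq_degree, ← hδ]
    exact_mod_cast G.minDegree_le_degree u
  have hscard : c * n ≤ s := hdeg v
  have htcard : c * n ≤ t := hdeg v'
  -- Euclidean space vectors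
  set ν' : EuclideanSpace ℝ (Fin n) := toE ν with hν'
  set x : EuclideanSpace ℝ (Fin n) := toE (fun i => if i ∈ S then (1:ℝ) else 0) with hx
  set y : EuclideanSpace ℝ (Fin n) := toE (fun i => if i ∈ T then (1:ℝ) else 0) with hy
  have hinner : ∀ a b : Fin n → ℝ, ⟪toE a, toE b⟫ = ∑ i, a i * b i := by
    intro a b
    simp [toE, PiLp.inner_apply, RCLike.inner_apply, mul_comm]
  have hνν : ⟪ν', ν'⟫ = 1 := by
    rw [hν', hinner]
    rw [← hνnorm]
    exact Finset.sum_congr rfl fun i _ => (sq (ν i)).symm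
  have hν'0 : ν' ≠ 0 := by
    intro h
    have h2 : ν' ⟨0, by omega⟩ = 0 := by rw [h]; rfl
    exact absurd h2 (hνpos ⟨0, by omega⟩).ne'
  -- inner products with indicator vectors
  set α : ℝ := ⟪x, ν'⟫ with hα
  set β : ℝ := ⟪y, ν'⟫ with hβ
  have hαval : α = ∑ u ∈ S, ν u := by
    rw [hα, hx, hν', hinner]
    simp [ite_mul, Finset.sum_ite_mem]
  have hβval : β = ∑ u ∈ T, ν u := by
    rw [hβ, hy, hν', hinner]
    simp [ite_mul, Finset.sum_ite_mem]
  have hαge : νmin * s ≤ α := by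
    rw [hαval, hs]
    calc νmin * (S.card : ℝ) = ∑ _u ∈ S, νmin := by rw [Finset.sum_const, nsmul_eq_mul]; ring
      _ ≤ ∑ u ∈ S, ν u := Finset.sum_le_sum fun u _ => hνminle u
  have hβge : νmin * t ≤ β := by
    rw [hβval, ht]
    calc νmin * (T.card : ℝ) = ∑ _u ∈ T, νmin := by rw [Finset.sum_const, nsmul_eq_mul]; ring
      _ ≤ ∑ u ∈ T, ν u := Finset.sum_le_sum fun u _ => hνminle u
  -- norms
  have hxnorm : ‖x‖ ^ 2 = s := by
    rw [← real_inner_self_eq_norm_sq, hx, hinner, hs]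
    simp [ite_mul, Finset.sum_ite_mem]
  have hynorm : ‖y‖ ^ 2 = t := by
    rw [← real_inner_self_eq_norm_sq, hy, hinner, ht]
    simp [ite_mul, Finset.sum_ite_mem]
  -- orthogonal decomposition
  set xp : EuclideanSpace ℝ (Fin n) := x - α • ν' with hxp
  set yp : EuclideanSpace ℝ (Fin n) := y - β • ν' with hyp
  have hxpν : ⟪xp, ν'⟫ = 0 := by
    rw [hxp, inner_sub_left, real_inner_smul_left, hνν, ← hα]; ring
  have hypν : ⟪yp, ν'⟫ = 0 := by
    rw [hyp, inner_sub_left, real_inner_smul_left, hνν, ← hβ]; ring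
  -- e(S,T) as inner product
  have heST : (∑ u ∈ S, ∑ w ∈ T, A u w) = ⟪x, toE (A *ᵥ (y : Fin n → ℝ))⟫ := by
    rw [hx, hinner]
    have : ∀ i, (A *ᵥ (y : Fin n → ℝ)) i = ∑ j ∈ T, A i j := by
      intro i
      rw [hy]
      show (∑ j, A i j * (if j ∈ T then (1:ℝ) else 0)) = _
      simp [mul_ite, Finset.sum_ite_mem]
    simp only [this]
    simp [ite_mul, Finset.sum_ite_mem]
  -- decomposition of the bilinear form
  have hAν' : toE (A *ᵥ (ν' : Fin n → ℝ)) = μ0 • ν' := by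
    rw [hν']
    show toE (A *ᵥ ν) = μ0 • toE ν
    rw [hνeig]; rfl
  have hsplit : ⟪x, toE (A *ᵥ (y : Fin n → ℝ))⟫
      = ⟪xp, toE (A *ᵥ (yp : Fin n → ℝ))⟫ + μ0 * (α * β) := by
    have hy' : (y : Fin n → ℝ) = (yp : Fin n → ℝ) + β • (ν' : Fin n → ℝ) := by
      rw [hyp]; ext i; simp [toE]
    rw [hy']
    have hmv : A *ᵥ ((yp : Fin n → ℝ) + β • (ν' : Fin n → ℝ))
        = (A *ᵥ (yp : Fin n → ℝ)) + β • (A *ᵥ (ν' : Fin n → ℝ)) := by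
      rw [Matrix.mulVec_add, Matrix.mulVec_smul]
    rw [hmv]
    have htoE : toE ((A *ᵥ (yp : Fin n → ℝ)) + β • (A *ᵥ (ν' : Fin n → ℝ)))
        = toE (A *ᵥ (yp : Fin n → ℝ)) + β • toE (A *ᵥ (ν' : Fin n → ℝ)) := rfl
    rw [htoE, inner_add_right, real_inner_smul_right, hAν', real_inner_smul_right, ← hα]
    have hxdec : x = xp + α • ν' := by rw [hxp]; abel
    have hperpν : ⟪ν', toE (A *ᵥ (yp : Fin n → ℝ))⟫ = 0 := by
      rw [symm_inner hAH, hAν', real_inner_smul_left, real_inner_comm yp ν', hypν, mul_zero]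
    have h1 : ⟪x, toE (A *ᵥ (yp : Fin n → ℝ))⟫ = ⟪xp, toE (A *ᵥ (yp : Fin n → ℝ))⟫ := by
      conv_lhs => rw [hxdec]
      rw [inner_add_left, real_inner_smul_left, hperpν]
      ring
    rw [h1]
    ring
  -- spectral bound on the perpendicular part
  have hperp := perp_bound hn hAH lam hmono heig ν' hν'0 (by rw [hν']; exact hνeig) lamAbs
    hlamAbs xp yp hxpν hypν
  -- norms of perpendicular parts
  have hxpnorm : ‖xp‖ ≤ ‖x‖ := by
    have h1 : ‖xp‖ ^ 2 = ‖x‖ ^ 2 - α ^ 2 := by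
      rw [← real_inner_self_eq_norm_sq, ← real_inner_self_eq_norm_sq]
      rw [hxp]
      rw [inner_sub_left, inner_sub_right, inner_sub_right, real_inner_smul_left,
        real_inner_smul_right, real_inner_smul_right, real_inner_smul_left, hνν,
        real_inner_comm x ν', ← hα]
      ring
    have h2 : ‖xp‖ ^ 2 ≤ ‖x‖ ^ 2 := by linarith [sq_nonneg α]
    exact (abs_le_of_sq_le_sq' h2 (norm_nonneg x)).2
  have hypnorm : ‖yp‖ ≤ ‖y‖ := by
    have h1 : ‖yp‖ ^ 2 = ‖y‖ ^ 2 - β ^ 2 := by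
      rw [← real_inner_self_eq_norm_sq, ← real_inner_self_eq_norm_sq]
      rw [hyp]
      rw [inner_sub_left, inner_sub_right, inner_sub_right, real_inner_smul_left,
        real_inner_smul_right, real_inner_smul_right, real_inner_smul_left, hνν,
        real_inner_comm y ν', ← hβ]
      ring
    have h2 : ‖yp‖ ^ 2 ≤ ‖y‖ ^ 2 := by linarith [sq_nonneg β]
    exact (abs_le_of_sq_le_sq' h2 (norm_nonneg y)).2
  -- put everything together
  set P : ℝ := ‖x‖ * ‖y‖ with hP
  have hPsq : P ^ 2 = s * t := by rw [hP, mul_pow, hxnorm, hynorm]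
  have hPnn : 0 ≤ P := mul_nonneg (norm_nonneg _) (norm_nonneg _)
  have hbd : |⟪xp, toE (A *ᵥ (yp : Fin n → ℝ))⟫| ≤ lamAbs * P := by
    refine le_trans hperp ?_
    rw [hP]
    apply mul_le_mul_of_nonneg_left _ hlamAbsnn
    exact mul_le_mul hxpnorm hypnorm (norm_nonneg _) (norm_nonneg _)
  have hlow : -(lamAbs * P) ≤ ⟪xp, toE (A *ᵥ (yp : Fin n → ℝ))⟫ := (abs_le.1 hbd).1
  have hgap' : lamAbs < 2 * μ0 * νmin ^ 2 * (c * (n:ℝ)) := by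
    rw [← mul_assoc]
    exact hgap
  have H := final_arith (c * n) s t P lamAbs μ0 νmin (⟪xp, toE (A *ᵥ (yp : Fin n → ℝ))⟫) α β
    hcn hscard htcard hPsq hPnn hαge hβge hgap' hlamAbsnn hμ0pos hνminpos hlow
  rw [heST, hsplit]
  have hassoc : c * (n:ℝ) * (μ0 * (c * (n:ℝ)) * νmin ^ 2 - lamAbs)
      = c * (n:ℝ) * (μ0 * c * (n:ℝ) * νmin ^ 2 - lamAbs) := by ring
  rw [hassoc] at H
  linarith [H]
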